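/- Suppose a_tgc : (0, δ) → ℝ is differentiable with limit of derivative L⁺ = lim_{b→0⁺} a_tgc'(b) ∈ (9/8, 23/8), and γ : (−δ,δ) → ℝ is C¹ with γ(0) = 2, γ'(0) = 23/8, and a_tgc(b) → 2 as b → 0⁺. If additionally Γ is C¹ near (2,0) with Γ(γ(b),b) = 0, ∂Γ/∂a < 0 near (2,0), and Γ(a,0) < 0 for a ∈ (2, 2+δ), then there exists δ' > 0 such that Γ(a_tgc(b), b) > 0 for all b ∈ (0, δ'). -/

import Mathlib

open Set Filter

/-- Abstract form of the non-degeneracy argument (Theorem 1.2): since the slope of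
the first-bifurcation curve `a_tgc` at `b = 0⁺` lies in `(9/8, 23/8)`, strictly
below the slope `23/8` of the zero locus `a = γ(b)` of `Γ`, and `Γ` decreases in
`a` near `(2,0)` with `Γ(a,0) < 0` for `a > 2`, the curve `a_tgc` lies on the side
where `Γ > 0` for small `b > 0`. -/
theorem nondegeneracy_from_slopes (δ : ℝ) (hδ : 0 < δ)
    (atgc γ : ℝ → ℝ) (Γ : ℝ × ℝ → ℝ) (L : ℝ)
    (hdiff : ∀ b ∈ Ioo (0 : ℝ) δ, DifferentiableAt ℝ atgc b)
    (hL : Tendsto (deriv atgc) (nhdsWithin 0 (Ioi 0)) (nhds L))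
    (hLmem : L ∈ Ioo (9 / 8 : ℝ) (23 / 8))
    (hγ : ContDiffOn ℝ 1 γ (Ioo (-δ) δ))
    (hγ0 : γ 0 = 2) (hγ' : deriv γ 0 = 23 / 8)
    (hlim : Tendsto atgc (nhdsWithin 0 (Ioi 0)) (nhds 2))
    (hΓC1 : ContDiffAt ℝ 1 Γ (2, 0))
    (hΓγ : ∀ b ∈ Ioo (-δ) δ, Γ (γ b, b) = 0)
    (hΓa : ∃ U ∈ nhds ((2 : ℝ), (0 : ℝ)), ∀ p ∈ U, fderiv ℝ Γ p (1, 0) < 0)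
    (hΓ0 : ∀ a ∈ Ioo (2 : ℝ) (2 + δ), Γ (a, 0) < 0) :
    ∃ δ' > 0, ∀ b ∈ Ioo (0 : ℝ) δ', Γ (atgc b, b) > 0 := by
  obtain ⟨hL9, hL23⟩ := hLmem
  set e : ℝ := (23 / 8 - L) / 3 with he
  have he0 : 0 < e := by simp only [he]; linarith
  set M : ℝ := L + e with hM
  set m : ℝ := 23 / 8 - e with hm
  have hMm : M < m := by simp only [hM, hm, he]; linarith
  -- neighborhood where Γ is differentiable and ∂Γ/∂a < 0
  obtain ⟨u, hu, hΓu⟩ := hΓC1.contDiffOn le_rfl (by simp)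
  obtain ⟨v, hvu, hvopen, hvmem⟩ := mem_nhds_iff.mp hu
  obtain ⟨U, hU, hUneg⟩ := hΓa
  obtain ⟨r, hr0, hball⟩ := Metric.mem_nhds_iff.mp (Filter.inter_mem (hvopen.mem_nhds hvmem) hU)
  have hΓdiff : ∀ p ∈ Metric.ball ((2 : ℝ), (0 : ℝ)) r, DifferentiableAt ℝ Γ p := by
    intro p hp
    have hpv : p ∈ v := (hball hp).1
    exact ((hΓu.mono hvu).differentiableOn one_ne_zero).differentiableAt (hvopen.mem_nhds hpv)
  -- threshold for deriv atgc < M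
  have h1 : ∀ᶠ x in nhdsWithin 0 (Ioi 0), deriv atgc x < M :=
    hL.eventually_lt_const (by simp only [hM]; linarith)
  obtain ⟨δ₁, hδ₁0, hδ₁⟩ := Metric.mem_nhdsWithin_iff.mp h1
  have hδ₁' : ∀ x ∈ Ioo (0 : ℝ) δ₁, deriv atgc x < M := by
    intro x hx
    exact hδ₁ ⟨by simpa [Real.dist_eq, abs_of_pos hx.1] using hx.2, hx.1⟩
  -- deriv γ continuity near 0
  have hIoo : Ioo (-δ) δ ∈ nhds (0 : ℝ) := Ioo_mem_nhds (by linarith) hδ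
  have hdγcont : ContinuousOn (deriv γ) (Ioo (-δ) δ) :=
    hγ.continuousOn_deriv_of_isOpen isOpen_Ioo le_rfl
  have hdγ0 : Tendsto (deriv γ) (nhds 0) (nhds (23 / 8)) := by
    have h := hdγcont 0 ⟨by linarith, hδ⟩
    rw [ContinuousWithinAt, nhdsWithin_eq_nhds.mpr hIoo, hγ'] at h
    exact h
  have h2 : ∀ᶠ x in nhds (0 : ℝ), m < deriv γ x :=
    hdγ0.eventually_const_lt (by simp only [hm]; linarith)
  obtain ⟨δ₂, hδ₂0, hδ₂⟩ := Metric.eventually_nhds_iff.mp h2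
  -- atgc close to 2
  have h3 : ∀ᶠ b in nhdsWithin 0 (Ioi 0), dist (atgc b) 2 < r :=
    hlim (Metric.ball_mem_nhds 2 hr0)
  obtain ⟨δ₃, hδ₃0, hδ₃⟩ := Metric.mem_nhdsWithin_iff.mp h3
  -- γ close to 2
  have hγcont : Tendsto γ (nhds 0) (nhds 2) := by
    have h := (hγ.continuousOn) 0 ⟨by linarith, hδ⟩
    rw [ContinuousWithinAt, nhdsWithin_eq_nhds.mpr hIoo, hγ0] at h
    exact h
  obtain ⟨δ₄, hδ₄0, hδ₄⟩ := Metric.eventually_nhds_iff.mp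
    (hγcont (Metric.ball_mem_nhds 2 hr0))
  -- main bound: atgc b ≤ 2 + M * b for small b
  have key1 : ∀ b ∈ Ioo (0 : ℝ) (min δ₁ δ), atgc b ≤ 2 + M * b := by
    intro b hb
    have hb0 : 0 < b := hb.1
    have hbδ : b < δ := lt_of_lt_of_le hb.2 (min_le_right _ _)
    have hbδ₁ : b < δ₁ := lt_of_lt_of_le hb.2 (min_le_left _ _)
    have hstep : ∀ b' ∈ Ioo (0 : ℝ) b, atgc b - atgc b' ≤ M * (b - b') := by
      intro b' hb'
      have hsub : Icc b' b ⊆ Ioo 0 δ := fun x hx =>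
        ⟨lt_of_lt_of_le hb'.1 hx.1, lt_of_le_of_lt hx.2 hbδ⟩
      have hcont : ContinuousOn atgc (Icc b' b) := fun x hx =>
        (hdiff x (hsub hx)).continuousAt.continuousWithinAt
      have hdf : DifferentiableOn ℝ atgc (Ioo b' b) := fun x hx =>
        (hdiff x (hsub (Ioo_subset_Icc_self hx))).differentiableWithinAt
      obtain ⟨c, hc, hcd⟩ := exists_deriv_eq_slope atgc hb'.2 hcont hdf
      have hcM : deriv atgc c < M := hδ₁' c
        ⟨lt_trans hb'.1 hc.1, lt_trans hc.2 hbδ₁⟩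
      have hbb' : 0 < b - b' := by linarith [hc.1, hc.2, hb'.2]
      have : (atgc b - atgc b') / (b - b') ≤ M := hcd ▸ le_of_lt hcM
      calc atgc b - atgc b' = (atgc b - atgc b') / (b - b') * (b - b') := by
            field_simp
        _ ≤ M * (b - b') := by nlinarith
    have hT1 : Tendsto (fun b' => atgc b - atgc b') (nhdsWithin 0 (Ioi 0))
        (nhds (atgc b - 2)) := tendsto_const_nhds.sub hlim
    have hT2 : Tendsto (fun b' : ℝ => M * (b - b')) (nhdsWithin 0 (Ioi 0))
        (nhds (M * b)) := by
      have : Tendsto (fun b' : ℝ => M * (b - b')) (nhds 0) (nhds (M * (b - 0))) :=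
        (tendsto_const_nhds.sub tendsto_id).const_mul M
      simpa using this.mono_left nhdsWithin_le_nhds
    have hEv : ∀ᶠ b' in nhdsWithin 0 (Ioi 0), atgc b - atgc b' ≤ M * (b - b') := by
      filter_upwards [self_mem_nhdsWithin,
        eventually_nhdsWithin_of_eventually_nhds (eventually_lt_nhds hb0)] with b' hb'1 hb'2
      exact hstep b' ⟨hb'1, hb'2⟩
    have := le_of_tendsto_of_tendsto hT1 hT2 hEv
    linarith
  -- bound: 2 + m * b ≤ γ b for small b
  have key2 : ∀ b ∈ Ioo (0 : ℝ) (min δ₂ δ), 2 + m * b ≤ γ b := by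
    intro b hb
    have hb0 : 0 < b := hb.1
    have hbδ : b < δ := lt_of_lt_of_le hb.2 (min_le_right _ _)
    have hsub : Icc 0 b ⊆ Ioo (-δ) δ := fun x hx =>
      ⟨lt_of_lt_of_le (by linarith) hx.1, lt_of_le_of_lt hx.2 hbδ⟩
    have hcont : ContinuousOn γ (Icc 0 b) := hγ.continuousOn.mono hsub
    have hdf : DifferentiableOn ℝ γ (Ioo 0 b) :=
      (hγ.differentiableOn one_ne_zero).mono fun x hx => hsub (Ioo_subset_Icc_self hx)
    obtain ⟨c, hc, hcd⟩ := exists_deriv_eq_slope γ hb0 hcont hdf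
    have hcm : m < deriv γ c := by
      apply hδ₂
      have : |c| < δ₂ := by
        rw [abs_of_pos hc.1]
        exact lt_of_lt_of_le hc.2 (lt_of_lt_of_le hb.2 (min_le_left _ _)).le
      simpa [Real.dist_eq] using this
    rw [hγ0, sub_zero] at hcd
    have h' : m ≤ (γ b - 2) / b := hcd ▸ le_of_lt hcm
    have h'' : m * b ≤ γ b - 2 := (le_div_iff₀ hb0).mp h'
    linarith
  -- choose δ'
  refine ⟨min δ₁ (min δ₂ (min δ₃ (min δ₄ (min δ r)))), by positivity, ?_⟩
  intro b hb
  have hb0 : 0 < b := hb.1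
  have hbδ₁ : b < δ₁ := lt_of_lt_of_le hb.2 (min_le_left _ _)
  have hbδ₂ : b < δ₂ := lt_of_lt_of_le hb.2 ((min_le_right _ _).trans (min_le_left _ _))
  have hbδ₃ : b < δ₃ := lt_of_lt_of_le hb.2
    ((min_le_right _ _).trans ((min_le_right _ _).trans (min_le_left _ _)))
  have hbδ₄ : b < δ₄ := lt_of_lt_of_le hb.2
    ((min_le_right _ _).trans ((min_le_right _ _).trans ((min_le_right _ _).trans (min_le_left _ _))))
  have hbδ : b < δ := lt_of_lt_of_le hb.2
    ((min_le_right _ _).trans ((min_le_right _ _).trans ((min_le_right _ _).trans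
      ((min_le_right _ _).trans (min_le_left _ _)))))
  have hbr : b < r := lt_of_lt_of_le hb.2
    ((min_le_right _ _).trans ((min_le_right _ _).trans ((min_le_right _ _).trans
      ((min_le_right _ _).trans (min_le_right _ _)))))
  -- atgc b < γ b
  have hA : atgc b ≤ 2 + M * b := key1 b ⟨hb0, lt_min hbδ₁ hbδ⟩
  have hB : 2 + m * b ≤ γ b := key2 b ⟨hb0, lt_min hbδ₂ hbδ⟩
  have hlt : atgc b < γ b := by nlinarith
  -- distance bounds
  have hda : dist (atgc b) 2 < r :=
    hδ₃ ⟨by simpa [Real.dist_eq, abs_of_pos hb0] using hbδ₃, hb0⟩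
  have hdg : dist (γ b) 2 < r := by
    have := hδ₄ (y := b) (by simpa [Real.dist_eq, abs_of_pos hb0] using hbδ₄)
    simpa using this
  have hmemball : ∀ x ∈ Icc (atgc b) (γ b), ((x, b) : ℝ × ℝ) ∈ Metric.ball ((2:ℝ), (0:ℝ)) r := by
    intro x hx
    rw [Metric.mem_ball, Prod.dist_eq]
    rw [Real.dist_eq, abs_sub_lt_iff] at hda hdg
    have h1 : dist x 2 < r := by
      rw [Real.dist_eq, abs_sub_lt_iff]
      constructor
      · linarith [hx.2, hdg.1]
      · linarith [hx.1, hda.2]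
    have h2 : dist b 0 < r := by simpa [Real.dist_eq, abs_of_pos hb0] using hbr
    exact max_lt h1 h2
  -- Γ(·, b) is strictly decreasing on [atgc b, γ b]
  have hg : ∀ x ∈ Icc (atgc b) (γ b),
      HasDerivAt (fun a => Γ (a, b)) (fderiv ℝ Γ (x, b) (1, 0)) x := by
    intro x hx
    have hd : HasDerivAt (fun a : ℝ => ((a, b) : ℝ × ℝ)) (1, 0) x :=
      (hasDerivAt_id x).prodMk (hasDerivAt_const x b)
    exact ((hΓdiff _ (hmemball x hx)).hasFDerivAt).comp_hasDerivAt x hd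
  have hanti : StrictAntiOn (fun a => Γ (a, b)) (Icc (atgc b) (γ b)) := by
    apply strictAntiOn_of_deriv_neg (convex_Icc _ _)
    · exact fun x hx => (hg x hx).continuousAt.continuousWithinAt
    · intro x hx
      rw [interior_Icc] at hx
      rw [(hg x (Ioo_subset_Icc_self hx)).deriv]
      exact hUneg _ (hball (hmemball x (Ioo_subset_Icc_self hx))).2
  have hend : Γ (γ b, b) = 0 := hΓγ b ⟨by linarith, hbδ⟩
  have := hanti (left_mem_Icc.mpr hlt.le) (right_mem_Icc.mpr hlt.le) hlt
  simpa [hend] using this
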